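/- arXiv:2302.02492 — 3 statements merged into one kernel-verified Lean document; each statement's English description precedes it below -/
import Mathlib

section
/- Let X be a torsion-free module over the polynomial ring ℂ[x] which is the union of an increasing chain of finite-dimensional ℂ-subspaces X₁ ⊆ X₂ ⊆ ⋯ such that x·Xₙ ⊆ Xₙ₊₁ for all n, and such that dim(Xₙ₊₁/Xₙ) = d for all sufficiently large n. Then for every ν ∈ ℂ, the quotient X/(x−ν)X has dimension at most d over ℂ. -/
/-- A torsion-free ℂ[x]-module with a filtration by finite-dimensional
subspaces whose dimension eventually grows by exactly `d` at each step has
`dim X/(x-ν)X ≤ d` for every ν ∈ ℂ. -/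
theorem stmt0 (X : Type*) [AddCommGroup X] [Module ℂ X]
    [Module (Polynomial ℂ) X] [IsScalarTower ℂ (Polynomial ℂ) X]
    (htf : ∀ (p : Polynomial ℂ) (v : X), p • v = 0 → p = 0 ∨ v = 0)
    (F : ℕ → Submodule ℂ X) (hmono : Monotone F)
    (hfd : ∀ n, FiniteDimensional ℂ (F n))
    (hunion : ∀ v : X, ∃ n, v ∈ F n)
    (hx : ∀ n, ∀ v ∈ F n, (Polynomial.X : Polynomial ℂ) • v ∈ F (n + 1))
    (d N : ℕ)
    (hdim : ∀ n ≥ N, Module.finrank ℂ (F (n + 1)) = Module.finrank ℂ (F n) + d)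
    (ν : ℂ) :
    Module.rank ℂ
      (X ⧸ Submodule.span ℂ
        {w : X | ∃ v : X, w = ((Polynomial.X : Polynomial ℂ) - Polynomial.C ν) • v})
      ≤ (d : Cardinal) := by
  classical
  set p : Polynomial ℂ := Polynomial.X - Polynomial.C ν with hp
  have hsmul_comm : ∀ (c : ℂ) (q : Polynomial ℂ) (v : X), q • (c • v) = c • (q • v) := by
    intro c q v
    rw [← algebraMap_smul (Polynomial ℂ) c v, ← mul_smul,
      ← algebraMap_smul (Polynomial ℂ) c (q • v), ← mul_smul, mul_comm]
  set T : X →ₗ[ℂ] X :=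
    { toFun := fun v => p • v
      map_add' := fun a b => smul_add p a b
      map_smul' := fun c v => hsmul_comm c p v } with hT
  have hTapp : ∀ v : X, T v = p • v := fun v => rfl
  have hSet : {w : X | ∃ v : X, w = p • v} = Set.range T := by
    ext w
    simp only [Set.mem_setOf_eq, Set.mem_range, hTapp, eq_comm]
  have hspan : Submodule.span ℂ {w : X | ∃ v : X, w = p • v} = LinearMap.range T := by
    rw [hSet, ← Submodule.span_eq (LinearMap.range T), LinearMap.coe_range]
  rw [hspan]
  have hpne : p ≠ 0 := Polynomial.X_sub_C_ne_zero ν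
  have hTinj : Function.Injective T := by
    rw [← LinearMap.ker_eq_bot, LinearMap.ker_eq_bot']
    intro v hv
    rcases htf p v hv with h | h
    · exact absurd h hpne
    · exact h
  apply rank_le
  intro s hli
  -- choose preimages
  set π := (LinearMap.range T).mkQ with hπ
  have hsurj : Function.Surjective π := Submodule.mkQ_surjective _
  choose w hw using fun q : s => hsurj (q : X ⧸ LinearMap.range T)
  -- all w lie in some F M
  choose m hm using fun q : s => hunion (w q)
  set M : ℕ := max N (s.attach.sup m) with hM
  have hwM : ∀ q : s, w q ∈ F M := by
    intro q
    exact hmono (le_trans (Finset.le_sup (Finset.mem_attach s q)) (le_max_right _ _)) (hm q)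
  have hNM : N ≤ M := le_max_left _ _
  -- build injective map (s → ℂ) × F M → F (M+1)
  have hmem : ∀ (c : s → ℂ) (u : F M),
      (∑ q : s, c q • w q) + T u ∈ F (M + 1) := by
    intro c u
    apply Submodule.add_mem
    · apply Submodule.sum_mem
      intro q _
      exact Submodule.smul_mem _ _ (hmono (Nat.le_succ M) (hwM q))
    · have h1 : (Polynomial.X : Polynomial ℂ) • (u : X) ∈ F (M + 1) := hx M u u.2
      have h2 : (Polynomial.C ν : Polynomial ℂ) • (u : X) ∈ F (M + 1) := by
        rw [show (Polynomial.C ν : Polynomial ℂ) • (u : X) = ν • (u : X) from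
          algebraMap_smul (Polynomial ℂ) ν (u : X)]
        exact Submodule.smul_mem _ _ (hmono (Nat.le_succ M) u.2)
      have : T u = (Polynomial.X : Polynomial ℂ) • (u : X)
          - (Polynomial.C ν : Polynomial ℂ) • (u : X) := by
        rw [hTapp, hp, sub_smul]
      rw [this]
      exact Submodule.sub_mem _ h1 h2
  set φ : ((s → ℂ) × (F M)) →ₗ[ℂ] F (M + 1) :=
    { toFun := fun cu => ⟨(∑ q : s, cu.1 q • w q) + T cu.2, hmem cu.1 cu.2⟩
      map_add' := by
        rintro ⟨c1, u1⟩ ⟨c2, u2⟩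
        ext
        simp [add_smul, Finset.sum_add_distrib]
        abel
      map_smul' := by
        rintro a ⟨c, u⟩
        ext
        simp [Finset.smul_sum, smul_smul, smul_add] } with hφ
  have hφinj : Function.Injective φ := by
    rw [← LinearMap.ker_eq_bot, LinearMap.ker_eq_bot']
    rintro ⟨c, u⟩ h0
    have h0' : (∑ q : s, c q • w q) + T u = 0 := congrArg Subtype.val h0
    have hπ0 : ∑ q : s, c q • (q : X ⧸ LinearMap.range T) = 0 := by
      have := congrArg π h0'
      simp only [map_add, map_sum, map_smul, map_zero] at this
      have hπT : π (T u) = 0 := (Submodule.Quotient.mk_eq_zero _).2 ⟨u, rfl⟩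
      simp only [hw, hπT, add_zero] at this
      exact this
    have hc : ∀ q : s, c q = 0 := by
      have := Fintype.linearIndependent_iff.mp hli c hπ0
      exact this
    have hT0 : T u = 0 := by
      have : (∑ q : s, c q • w q) = 0 := by
        apply Finset.sum_eq_zero
        intro q _
        rw [hc q, zero_smul]
      rw [this, zero_add] at h0'
      exact h0'
    have hu : (u : X) = 0 := hTinj (by simpa using hT0)
    have : u = 0 := Subtype.ext hu
    rw [this]
    ext q
    · exact hc q
    · simp [this]
  haveI : FiniteDimensional ℂ (F M) := hfd M
  haveI : FiniteDimensional ℂ (F (M + 1)) := hfd (M + 1)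
  have hrank := LinearMap.finrank_le_finrank_of_injective hφinj
  rw [Module.finrank_prod, Module.finrank_pi, hdim M hNM] at hrank
  have : s.card ≤ d := by
    have := hrank
    simp only [Fintype.card_coe] at this
    omega
  exact_mod_cast Nat.cast_le.mpr this
end

section
/- In ℤ[q, q⁻¹] with χₙ = Σ_{j=0}^{n} q^{n−2j}, write the product χₐ·χ_b·χ_c (a, b, c natural numbers) uniquely as an ℤ-linear combination of the elements χ_z, z ≥ 0. Then the coefficient of χ₀ equals 1 if a + b + c is even and the triangle inequalities a ≤ b + c, b ≤ a + c, c ≤ a + b all hold, and equals 0 otherwise. -/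
/-- The character of the (n+1)-dimensional irreducible SU(2)-representation,
as a Laurent polynomial: χₙ = Σ_{j=0}^{n} q^{n-2j}. -/
noncomputable def chi (n : ℕ) : LaurentPolynomial ℤ :=
  ∑ j ∈ Finset.range (n + 1), LaurentPolynomial.T ((n : ℤ) - 2 * j)

/-- The additive functional picking out (coefficient at 0) − (coefficient at 2). -/
noncomputable def F : LaurentPolynomial ℤ →+ ℤ :=
  AddMonoidHom.comp ((Finsupp.applyAddHom (0:ℤ) - Finsupp.applyAddHom (2:ℤ) : (ℤ →₀ ℤ) →+ ℤ))
    (AddMonoidAlgebra.coeffAddEquiv (R := ℤ) (M := ℤ)).toAddMonoidHom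

lemma F_T (n : ℤ) :
    F (LaurentPolynomial.T n) = (if n = 0 then 1 else 0) - (if n = 2 then 1 else 0) := by
  show (LaurentPolynomial.T n : LaurentPolynomial ℤ).coeff 0 - (LaurentPolynomial.T n : LaurentPolynomial ℤ).coeff 2 = _
  rw [LaurentPolynomial.T_apply, LaurentPolynomial.T_apply]

lemma Hsum (n K M : ℕ) : (∑ j ∈ Finset.range n, if M = K + 2*j then (1:ℤ) else 0)
    = if K ≤ M ∧ (M - K) % 2 = 0 ∧ M < K + 2*n then 1 else 0 := by
  induction n with
  | zero => simp only [Finset.range_zero, Finset.sum_empty]; split_ifs <;> omega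
  | succ n ih => rw [Finset.sum_range_succ, ih]; split_ifs <;> omega

lemma Hcount (n p q r : ℕ) :
    (∑ i ∈ Finset.range n, if (i + r ≤ p ∧ p ≤ i + r + q) then (1:ℤ) else 0)
    = (↑(min n (p + 1 - r)) : ℤ) - ↑(min n (p - q - r)) := by
  induction n with
  | zero => simp only [Finset.range_zero, Finset.sum_empty]; omega
  | succ n ih => rw [Finset.sum_range_succ, ih]; split_ifs <;> omega

lemma F_chi (z : ℕ) : F (chi z) = if z = 0 then 1 else 0 := by
  rw [chi, map_sum]
  simp only [F_T]
  rw [Finset.sum_sub_distrib]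
  have e1 : (∑ j ∈ Finset.range (z+1), if (z:ℤ) - 2*j = 0 then (1:ℤ) else 0)
      = ∑ j ∈ Finset.range (z+1), if z = 0 + 2*j then (1:ℤ) else 0 :=
    Finset.sum_congr rfl fun j _ => by split_ifs <;> omega
  have e2 : (∑ j ∈ Finset.range (z+1), if (z:ℤ) - 2*j = 2 then (1:ℤ) else 0)
      = ∑ j ∈ Finset.range (z+1), if z = 2 + 2*j then (1:ℤ) else 0 :=
    Finset.sum_congr rfl fun j _ => by split_ifs <;> omega
  rw [e1, e2, Hsum, Hsum]
  split_ifs <;> omega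

lemma key (a b c : ℕ) :
    (∑ i ∈ Finset.range (a+1), ∑ j ∈ Finset.range (b+1), ∑ k ∈ Finset.range (c+1),
      ((if a+b+c = 2*(i+j+k) then (1:ℤ) else 0) - (if a+b+c = 2*(i+j+k)+2 then 1 else 0)))
    = if Even (a+b+c) ∧ a ≤ b+c ∧ b ≤ a+c ∧ c ≤ a+b then 1 else 0 := by
  simp only [Nat.even_iff]
  have hk : ∀ i j : ℕ, (∑ k ∈ Finset.range (c+1),
      ((if a+b+c = 2*(i+j+k) then (1:ℤ) else 0) - (if a+b+c = 2*(i+j+k)+2 then 1 else 0)))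
      = (if a+b+c = 2*(i+j) then (1:ℤ) else 0) - (if a+b+c = 2*(i+j+(c+1)) then 1 else 0) := by
    intro i j
    have h := Finset.sum_range_sub' (f := fun k => if a+b+c = 2*(i+j+k) then (1:ℤ) else 0) (c+1)
    rw [show (∑ k ∈ Finset.range (c+1),
        ((if a+b+c = 2*(i+j+k) then (1:ℤ) else 0) - (if a+b+c = 2*(i+j+k)+2 then 1 else 0)))
        = ∑ k ∈ Finset.range (c+1),
          ((if a+b+c = 2*(i+j+k) then (1:ℤ) else 0) - (if a+b+c = 2*(i+j+(k+1)) then 1 else 0))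
      from Finset.sum_congr rfl fun k _ => by split_ifs <;> omega]
    rw [h]
    split_ifs <;> omega
  simp only [hk]
  have h1 : ∀ i : ℕ, (∑ j ∈ Finset.range (b+1), if a+b+c = 2*(i+j) then (1:ℤ) else 0)
      = if 2*i ≤ a+b+c ∧ (a+b+c - 2*i) % 2 = 0 ∧ a+b+c < 2*i + 2*(b+1) then 1 else 0 := by
    intro i
    rw [← Hsum (b+1) (2*i) (a+b+c)]
    exact Finset.sum_congr rfl fun j _ => by split_ifs <;> omega
  have h2 : ∀ i : ℕ, (∑ j ∈ Finset.range (b+1), if a+b+c = 2*(i+j+(c+1)) then (1:ℤ) else 0)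
      = if 2*i+2*(c+1) ≤ a+b+c ∧ (a+b+c - (2*i+2*(c+1))) % 2 = 0
          ∧ a+b+c < 2*i+2*(c+1) + 2*(b+1) then 1 else 0 := by
    intro i
    rw [← Hsum (b+1) (2*i+2*(c+1)) (a+b+c)]
    exact Finset.sum_congr rfl fun j _ => by split_ifs <;> omega
  simp only [Finset.sum_sub_distrib, h1, h2]
  rcases Nat.even_or_odd (a+b+c) with he | ho
  · obtain ⟨s, hs⟩ := he
    have g1 : ∀ i : ℕ,
        (if 2*i ≤ a+b+c ∧ (a+b+c - 2*i) % 2 = 0 ∧ a+b+c < 2*i + 2*(b+1) then (1:ℤ) else 0)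
        = if (i + 0 ≤ s ∧ s ≤ i + 0 + b) then 1 else 0 := fun i => by split_ifs <;> omega
    have g2 : ∀ i : ℕ,
        (if 2*i+2*(c+1) ≤ a+b+c ∧ (a+b+c - (2*i+2*(c+1))) % 2 = 0
          ∧ a+b+c < 2*i+2*(c+1) + 2*(b+1) then (1:ℤ) else 0)
        = if (i + (c+1) ≤ s ∧ s ≤ i + (c+1) + b) then 1 else 0 := fun i => by split_ifs <;> omega
    simp only [g1, g2, Hcount]
    split_ifs <;> omega
  · have ho' : (a+b+c) % 2 = 1 := Nat.odd_iff.mp ho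
    have g1 : ∀ i : ℕ,
        (if 2*i ≤ a+b+c ∧ (a+b+c - 2*i) % 2 = 0 ∧ a+b+c < 2*i + 2*(b+1) then (1:ℤ) else 0)
        = 0 := fun i => by split_ifs <;> omega
    have g2 : ∀ i : ℕ,
        (if 2*i+2*(c+1) ≤ a+b+c ∧ (a+b+c - (2*i+2*(c+1))) % 2 = 0
          ∧ a+b+c < 2*i+2*(c+1) + 2*(b+1) then (1:ℤ) else 0)
        = 0 := fun i => by split_ifs <;> omega
    simp only [g1, g2]
    split_ifs <;> omega

/-- In any expansion of χₐ·χ_b·χ_c as a ℤ-linear combination of the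
basis elements χ_z, the coefficient of χ₀ is 1 if a+b+c is even and a, b, c
satisfy the triangle inequalities, and 0 otherwise. -/
theorem stmt7 (a b c : ℕ) (co : ℕ →₀ ℤ)
    (hco : chi a * chi b * chi c = co.sum fun z m => m • chi z) :
    co 0 = if Even (a + b + c) ∧ a ≤ b + c ∧ b ≤ a + c ∧ c ≤ a + b then 1 else 0 := by
  have hR : F (co.sum fun z m => m • chi z) = co 0 := by
    rw [map_finsuppSum]
    simp only [map_zsmul, F_chi, smul_eq_mul]
    rw [Finsupp.sum, Finset.sum_eq_single 0]
    · simp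
    · intro w _ hw; simp [hw]
    · intro h; simp [Finsupp.notMem_support_iff.mp h]
  have hL : F (chi a * chi b * chi c)
      = if Even (c+b+a) ∧ c ≤ b+a ∧ b ≤ c+a ∧ a ≤ c+b then 1 else 0 := by
    simp only [chi, Finset.sum_mul, Finset.mul_sum, ← LaurentPolynomial.T_add, map_sum, F_T]
    rw [← key c b a]
    refine Finset.sum_congr rfl fun i _ => Finset.sum_congr rfl fun j _ =>
      Finset.sum_congr rfl fun k _ => ?_
    split_ifs <;> omega
  rw [← hR, ← hco, hL]
  have hiff : (Even (c+b+a) ∧ c ≤ b+a ∧ b ≤ c+a ∧ a ≤ c+b)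
      ↔ (Even (a+b+c) ∧ a ≤ b+c ∧ b ≤ a+c ∧ c ≤ a+b) := by
    rw [Nat.even_iff, Nat.even_iff]; omega
  rw [if_congr hiff rfl rfl]
end

section
/- For all integers x ≥ y ≥ 0, the sum of (a+1)(b+1) over all pairs of natural numbers (a, b) satisfying a + b ≡ x + y (mod 2), |a − b| ≤ x − y, and x − y ≤ a + b ≤ x + y, equals (x−y+1)(x+y+3)(x+2)(y+1)/6. -/
open Finset

private lemma sum_lin (xq yq : ℚ) (n : ℕ) :
    ∑ j ∈ range n, ((yq + j + 1) * (xq - j + 1)) =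
      n * (yq + 1) * (xq + 1) + (xq - yq) * ((n : ℚ) * ((n : ℚ) - 1)) / 2
        - ((n : ℚ) - 1) * n * (2 * n - 1) / 6 := by
  induction n with
  | zero => simp
  | succ n ih => rw [Finset.sum_range_succ, ih]; push_cast; ring

private lemma shrink (f : ℕ → ℕ → ℚ) (m N : ℕ) (h : m ≤ N)
    (hf : ∀ a b, (m ≤ a ∨ m ≤ b) → f a b = 0) :
    ∑ a ∈ range N, ∑ b ∈ range N, f a b = ∑ a ∈ range m, ∑ b ∈ range m, f a b := by
  have h1 : ∀ a : ℕ, ∑ b ∈ range N, f a b = ∑ b ∈ range m, f a b := by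
    intro a
    refine (Finset.sum_subset (Finset.range_subset_range.2 h) fun b _ hb => ?_).symm
    exact hf a b (Or.inr (le_of_not_gt fun hlt => hb (Finset.mem_range.2 hlt)))
  rw [Finset.sum_congr rfl fun a _ => h1 a]
  refine (Finset.sum_subset (Finset.range_subset_range.2 h) fun a _ ha => ?_).symm
  exact Finset.sum_eq_zero fun b _ =>
    hf a b (Or.inl (le_of_not_gt fun hlt => ha (Finset.mem_range.2 hlt)))

private lemma layer (x y : ℕ) (hxy : y ≤ x) (N : ℕ) (hN : x + y < N) :
    (∑ a ∈ range N, ∑ b ∈ range N,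
      if ((a + b) % 2 = (x + y) % 2 ∧ (a : ℤ) - b ≤ (x : ℤ) - y ∧
          (b : ℤ) - a ≤ (x : ℤ) - y ∧ (a : ℤ) + b = (x : ℤ) + y)
        then ((a : ℚ) + 1) * ((b : ℚ) + 1) else 0)
    = ∑ j ∈ range (x - y + 1), (((y : ℚ) + j + 1) * ((x : ℚ) - j + 1)) := by
  have h1 : ∀ a ∈ range N, (∑ b ∈ range N,
      if ((a + b) % 2 = (x + y) % 2 ∧ (a : ℤ) - b ≤ (x : ℤ) - y ∧
          (b : ℤ) - a ≤ (x : ℤ) - y ∧ (a : ℤ) + b = (x : ℤ) + y)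
        then ((a : ℚ) + 1) * ((b : ℚ) + 1) else 0)
      = if y ≤ a ∧ a ≤ x then ((a : ℚ) + 1) * (((x + y - a : ℕ) : ℚ) + 1) else 0 := by
    intro a ha
    by_cases hc : y ≤ a ∧ a ≤ x
    · rw [if_pos hc, Finset.sum_eq_single (x + y - a)]
      · rw [if_pos (by omega)]
      · intro b hb hne; rw [if_neg (by omega)]
      · intro h; exact absurd (Finset.mem_range.2 (by omega)) h
    · rw [if_neg hc]
      exact Finset.sum_eq_zero fun b hb => if_neg (by omega)
  rw [Finset.sum_congr rfl h1, ← Finset.sum_filter]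
  have hset : (range N).filter (fun a => y ≤ a ∧ a ≤ x) = Finset.Icc y x := by
    ext a; simp [Finset.mem_filter, Finset.mem_range, Finset.mem_Icc]; omega
  rw [hset, show Finset.Icc y x = Finset.Ico y (x+1) from by rw [Finset.Ico_add_one_right_eq_Icc],
    Finset.sum_Ico_eq_sum_range, show x + 1 - y = x - y + 1 from by omega]
  refine Finset.sum_congr rfl fun j hj => ?_
  have hj' : j ≤ x - y := by
    have := Finset.mem_range.1 hj; omega
  rw [show x + y - (y + j) = x - j from by omega, Nat.cast_sub (by omega : j ≤ x)]
  push_cast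
  ring

private lemma main : ∀ (y x : ℕ), y ≤ x →
    (∑ a ∈ Finset.range (x + y + 1), ∑ b ∈ Finset.range (x + y + 1),
        if ((a + b) % 2 = (x + y) % 2 ∧ (a : ℤ) - b ≤ (x : ℤ) - y ∧
            (b : ℤ) - a ≤ (x : ℤ) - y ∧ ((x : ℤ) - y) ≤ a + b ∧ (a : ℤ) + b ≤ x + y)
          then ((a : ℚ) + 1) * ((b : ℚ) + 1) else 0)
      = ((x : ℚ) - y + 1) * (x + y + 3) * (x + 2) * (y + 1) / 6 := by
  intro y
  induction y with
  | zero =>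
    intro x hxy
    have e : (∑ a ∈ Finset.range (x + 0 + 1), ∑ b ∈ Finset.range (x + 0 + 1),
        if ((a + b) % 2 = (x + 0) % 2 ∧ (a : ℤ) - b ≤ (x : ℤ) - (0:ℕ) ∧
            (b : ℤ) - a ≤ (x : ℤ) - (0:ℕ) ∧ ((x : ℤ) - (0:ℕ)) ≤ a + b ∧ (a : ℤ) + b ≤ x + (0:ℕ))
          then ((a : ℚ) + 1) * ((b : ℚ) + 1) else 0)
        = (∑ a ∈ Finset.range (x + 0 + 1), ∑ b ∈ Finset.range (x + 0 + 1),
        if ((a + b) % 2 = (x + 0) % 2 ∧ (a : ℤ) - b ≤ (x : ℤ) - (0:ℕ) ∧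
            (b : ℤ) - a ≤ (x : ℤ) - (0:ℕ) ∧ (a : ℤ) + b = (x : ℤ) + (0:ℕ))
          then ((a : ℚ) + 1) * ((b : ℚ) + 1) else 0) := by
      refine Finset.sum_congr rfl fun a _ => Finset.sum_congr rfl fun b _ => ?_
      refine if_congr ?_ rfl rfl
      omega
    rw [e, layer x 0 (by omega) _ (by omega), show x - 0 + 1 = x + 1 from by omega, sum_lin]
    push_cast
    ring
  | succ y IH =>
    intro x hxy
    have key : ∀ a b : ℕ,
        (if ((a + b) % 2 = (x + (y+1)) % 2 ∧ (a : ℤ) - b ≤ (x : ℤ) - (y+1:ℕ) ∧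
            (b : ℤ) - a ≤ (x : ℤ) - (y+1:ℕ) ∧ ((x : ℤ) - (y+1:ℕ)) ≤ a + b ∧
            (a : ℤ) + b ≤ x + (y+1:ℕ))
          then ((a : ℚ) + 1) * ((b : ℚ) + 1) else 0)
        = (if ((a + b) % 2 = (x - 1 + y) % 2 ∧ (a : ℤ) - b ≤ ((x - 1 : ℕ) : ℤ) - y ∧
            (b : ℤ) - a ≤ ((x - 1 : ℕ) : ℤ) - y ∧ (((x - 1 : ℕ) : ℤ) - y) ≤ a + b ∧
            (a : ℤ) + b ≤ ((x - 1 : ℕ) : ℤ) + y)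
          then ((a : ℚ) + 1) * ((b : ℚ) + 1) else 0)
        + (if ((a + b) % 2 = (x + (y+1)) % 2 ∧ (a : ℤ) - b ≤ (x : ℤ) - (y+1:ℕ) ∧
            (b : ℤ) - a ≤ (x : ℤ) - (y+1:ℕ) ∧ (a : ℤ) + b = (x : ℤ) + (y+1:ℕ))
          then ((a : ℚ) + 1) * ((b : ℚ) + 1) else 0) := by
      intro a b
      by_cases hQ : ((a + b) % 2 = (x - 1 + y) % 2 ∧ (a : ℤ) - b ≤ ((x - 1 : ℕ) : ℤ) - y ∧
            (b : ℤ) - a ≤ ((x - 1 : ℕ) : ℤ) - y ∧ (((x - 1 : ℕ) : ℤ) - y) ≤ a + b ∧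
            (a : ℤ) + b ≤ ((x - 1 : ℕ) : ℤ) + y)
      · rw [if_pos hQ, if_pos (by omega), if_neg (by omega), add_zero]
      · by_cases hL : ((a + b) % 2 = (x + (y+1)) % 2 ∧ (a : ℤ) - b ≤ (x : ℤ) - (y+1:ℕ) ∧
            (b : ℤ) - a ≤ (x : ℤ) - (y+1:ℕ) ∧ (a : ℤ) + b = (x : ℤ) + (y+1:ℕ))
        · rw [if_pos hL, if_pos (by omega), if_neg hQ, zero_add]
        · rw [if_neg hQ, if_neg hL, if_neg (by omega), add_zero]
    rw [Finset.sum_congr rfl fun a _ => Finset.sum_congr rfl fun b _ => key a b]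
    simp only [Finset.sum_add_distrib]
    have hIH := IH (x - 1) (by omega)
    rw [show x - 1 + y + 1 = x + y from by omega] at hIH
    have hsh := shrink (fun a b =>
        (if ((a + b) % 2 = (x - 1 + y) % 2 ∧ (a : ℤ) - b ≤ ((x - 1 : ℕ) : ℤ) - y ∧
            (b : ℤ) - a ≤ ((x - 1 : ℕ) : ℤ) - y ∧ (((x - 1 : ℕ) : ℤ) - y) ≤ a + b ∧
            (a : ℤ) + b ≤ ((x - 1 : ℕ) : ℤ) + y)
          then ((a : ℚ) + 1) * ((b : ℚ) + 1) else 0))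
      (x + y) (x + (y + 1) + 1) (by omega)
      (fun a b hab => if_neg (by omega))
    rw [hsh, hIH, layer x (y + 1) (by omega) _ (by omega),
      show x - (y + 1) + 1 = x - y from by omega, sum_lin,
      Nat.cast_sub (show y ≤ x from by omega), Nat.cast_sub (show 1 ≤ x from by omega)]
    push_cast
    ring

/-- The sum of (a+1)(b+1) over pairs (a,b) of naturals with
a+b ≡ x+y (mod 2), |a-b| ≤ x-y and x-y ≤ a+b ≤ x+y equals the Weyl dimension
(x-y+1)(x+y+3)(x+2)(y+1)/6 of V_{(x,y)}. -/
theorem stmt11 (x y : ℕ) (hxy : y ≤ x) :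
    (∑ a ∈ Finset.range (x + y + 1), ∑ b ∈ Finset.range (x + y + 1),
        if ((a + b) % 2 = (x + y) % 2 ∧ (a : ℤ) - b ≤ (x : ℤ) - y ∧
            (b : ℤ) - a ≤ (x : ℤ) - y ∧ ((x : ℤ) - y) ≤ a + b ∧ (a : ℤ) + b ≤ x + y)
          then ((a : ℚ) + 1) * ((b : ℚ) + 1) else 0)
      = ((x : ℚ) - y + 1) * (x + y + 3) * (x + 2) * (y + 1) / 6 := by
  exact main y x hxy
end
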